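/- arXiv:2503.20923 — 3 statements merged into one kernel-verified Lean document; each statement's English description precedes it below -/
import Mathlib

section
/- Suppose the immigration generating function satisfies 1 - g(f^{∘n}(0)) = (1 + ε(n))·δ/n for a sequence ε(n) → 0, where δ ∈ (0,∞) and 0 < g(f^{∘i}(0)) < 1 for all i. Then there exists a function ℓ*: ℕ → (0,∞), slowly varying at infinity, such that ∏_{0 ≤ i < n} g(f^{∘i}(0)) ∼ ℓ*(n)·n^{-δ} as n → ∞. -/
open Filter

lemma aux_log_one_sub_slope :
    Tendsto (fun x : ℝ => Real.log (1 - x) / x) (nhdsWithin 0 {(0:ℝ)}ᶜ) (nhds (-1)) := by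
  have h1 : HasDerivAt (fun x : ℝ => 1 - x) (-1) 0 := by
    simpa using (hasDerivAt_id (0:ℝ)).const_sub 1
  have h2 : HasDerivAt (fun x : ℝ => Real.log (1 - x)) (-1) 0 := by
    have := (Real.hasDerivAt_log (by norm_num : (1:ℝ) - 0 ≠ 0)).comp 0 h1
    simpa [Function.comp_def] using this
  have := hasDerivAt_iff_tendsto_slope.mp h2
  refine this.congr fun x => ?_
  simp [slope_def_field, div_eq_mul_inv]

lemma aux_G :
    Tendsto (fun n : ℕ => (∑ i ∈ Finset.range n, ((i:ℝ))⁻¹) - Real.log n) atTop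
      (nhds Real.eulerMascheroniConstant) := by
  have h : Tendsto (fun n : ℕ => Real.eulerMascheroniSeq (n - 1)) atTop
      (nhds Real.eulerMascheroniConstant) :=
    Real.tendsto_eulerMascheroniSeq.comp (tendsto_sub_atTop_nat 1)
  refine h.congr' ?_
  filter_upwards [eventually_ge_atTop 1] with n hn
  obtain ⟨k, rfl⟩ := Nat.exists_eq_add_of_le hn
  have hsum : (∑ i ∈ Finset.range (1 + k), ((i:ℝ))⁻¹) = (harmonic k : ℝ) := by
    rw [add_comm, Finset.sum_range_succ']
    push_cast [harmonic]
    simp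
  simp only [Real.eulerMascheroniSeq, Nat.add_sub_cancel_left, hsum]
  push_cast
  ring_nf

/-- Key sum-difference lemma: if `i * c i → 0` then for any `l > 0`,
`∑_{i < ⌊l n⌋} c i - ∑_{i < n} c i → 0`. -/
lemma aux_sum_diff (c : ℕ → ℝ) (hc : Tendsto (fun i : ℕ => (i:ℝ) * c i) atTop (nhds 0))
    (l : ℝ) (hl : 0 < l) :
    Tendsto (fun n : ℕ => (∑ i ∈ Finset.range ⌊l * (n:ℝ)⌋₊, c i) - ∑ i ∈ Finset.range n, c i)
      atTop (nhds 0) := by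
  have hm : Tendsto (fun n : ℕ => ⌊l * (n:ℝ)⌋₊) atTop atTop :=
    tendsto_nat_floor_atTop.comp (Tendsto.const_mul_atTop hl tendsto_natCast_atTop_atTop)
  set C : ℝ := (max l 1 + 1) / (min l 1 / 2) with hC
  have hCpos : 0 < C := by
    apply div_pos (by positivity)
    have : 0 < min l 1 := lt_min hl one_pos
    linarith
  rw [NormedAddCommGroup.tendsto_nhds_zero]
  intro ρ hρ
  set ρ' : ℝ := ρ / (2 * C) with hρ'
  have hρ'pos : 0 < ρ' := by positivity
  have hev : ∀ᶠ i : ℕ in atTop, |(i:ℝ) * c i| ≤ ρ' := by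
    have := (NormedAddCommGroup.tendsto_nhds_zero.mp hc) ρ' hρ'pos
    filter_upwards [this] with i hi
    rw [Real.norm_eq_abs] at hi
    exact hi.le
  obtain ⟨N₀, hN₀⟩ := eventually_atTop.mp hev
  -- eventual facts about n
  have hminl : 0 < min l 1 := lt_min hl one_pos
  have hev2 : ∀ᶠ n : ℕ in atTop,
      max N₀ 1 ≤ n ∧ max N₀ 1 ≤ ⌊l * (n:ℝ)⌋₊ ∧ (2 / min l 1 : ℝ) ≤ (n:ℝ) :=
    (eventually_ge_atTop (max N₀ 1)).and
      ((hm.eventually (eventually_ge_atTop (max N₀ 1))).and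
        ((tendsto_natCast_atTop_atTop (R := ℝ)).eventually (eventually_ge_atTop _)))
  filter_upwards [hev2] with n hn
  obtain ⟨hn1, hn2, hn3⟩ := hn
  set m : ℕ := ⌊l * (n:ℝ)⌋₊ with hmdef
  set A : ℕ := min n m with hA
  set B : ℕ := max n m with hB
  have hAN : max N₀ 1 ≤ A := le_min hn1 hn2
  have hA1 : 1 ≤ A := le_trans (le_max_right _ _) hAN
  have hApos : (0:ℝ) < A := by exact_mod_cast hA1
  -- bound |sum diff| ≤ ∑_{Ico A B} |c i|
  have hdiff : |(∑ i ∈ Finset.range m, c i) - ∑ i ∈ Finset.range n, c i|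
      ≤ ∑ i ∈ Finset.Ico A B, |c i| := by
    rcases le_total n m with h | h
    · rw [← Finset.sum_Ico_eq_sub _ h]
      simp only [hA, hB, min_eq_left h, max_eq_right h]
      exact Finset.abs_sum_le_sum_abs _ _
    · rw [abs_sub_comm, ← Finset.sum_Ico_eq_sub _ h]
      simp only [hA, hB, min_eq_right h, max_eq_left h]
      exact Finset.abs_sum_le_sum_abs _ _
  -- per-term bound
  have hterm : ∀ i ∈ Finset.Ico A B, |c i| ≤ ρ' / A := by
    intro i hi
    obtain ⟨hi1, _⟩ := Finset.mem_Ico.mp hi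
    have hiN : N₀ ≤ i := le_trans (le_trans (le_max_left _ _) hAN) hi1
    have hi1' : 1 ≤ i := le_trans hA1 hi1
    have hipos : (0:ℝ) < i := by exact_mod_cast hi1'
    have h1 : |c i| ≤ ρ' / i := by
      rw [le_div_iff₀ hipos]
      have := hN₀ i hiN
      calc |c i| * i = |(i:ℝ) * c i| := by rw [abs_mul, abs_of_pos hipos]; ring
        _ ≤ ρ' := this
    exact h1.trans (div_le_div_of_nonneg_left hρ'pos.le hApos (by exact_mod_cast hi1))
  have hsum : ∑ i ∈ Finset.Ico A B, |c i| ≤ (B - A : ℕ) * (ρ' / A) := by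
    calc ∑ i ∈ Finset.Ico A B, |c i| ≤ ∑ _i ∈ Finset.Ico A B, (ρ' / A) :=
        Finset.sum_le_sum hterm
      _ = (B - A : ℕ) * (ρ' / A) := by rw [Finset.sum_const, Nat.card_Ico, nsmul_eq_mul]
  -- bound (B - A)/A ≤ C
  have hBle : (B:ℝ) ≤ (max l 1 + 1) * n := by
    have h1 : (n:ℝ) ≤ (max l 1 + 1) * n := by
      nlinarith [Nat.cast_nonneg (α := ℝ) n, le_max_right l 1]
    have h2 : (m:ℝ) ≤ (max l 1 + 1) * n := by
      have := Nat.floor_le (by positivity : (0:ℝ) ≤ l * n)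
      have h3 : l * n ≤ (max l 1 + 1) * n := by
        nlinarith [Nat.cast_nonneg (α := ℝ) n, le_max_left l 1]
      exact le_trans this h3
    rcases le_total n m with h | h
    · simpa [hB, max_eq_right h] using h2
    · simpa [hB, max_eq_left h] using h1
  have hAge : (min l 1 / 2) * n ≤ (A:ℝ) := by
    have hn3' : (2:ℝ) ≤ min l 1 * n := by
      rw [div_le_iff₀ hminl] at hn3; linarith [hn3]
    have h1 : (min l 1 / 2) * n ≤ (n:ℝ) := by
      nlinarith [Nat.cast_nonneg (α := ℝ) n, min_le_right l 1, hminl]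
    have h2 : (min l 1 / 2) * n ≤ (m:ℝ) := by
      have hfl : l * n - 1 < (m:ℝ) := Nat.sub_one_lt_floor (l * n)
      have : min l 1 * n - 1 ≤ l * n - 1 := by
        nlinarith [Nat.cast_nonneg (α := ℝ) n, min_le_left l 1]
      nlinarith [min_le_left l 1]
    rcases le_total n m with h | h
    · simpa [hA, min_eq_left h] using h1
    · simpa [hA, min_eq_right h] using h2
  have hBA : ((B - A : ℕ) : ℝ) ≤ (B:ℝ) := by
    have : ((B - A : ℕ) : ℝ) ≤ ((B:ℕ):ℝ) := by exact_mod_cast Nat.sub_le B A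
    exact this
  have hnpos : (0:ℝ) < n := by
    have : (1:ℕ) ≤ n := le_trans (le_max_right _ _) hn1
    exact_mod_cast this
  have hfinal : ((B - A : ℕ) : ℝ) * (ρ' / A) ≤ ρ' * C := by
    have hdivC : (B:ℝ) / A ≤ C := by
      rw [div_le_iff₀ hApos]
      have hCA : C * A ≥ C * ((min l 1 / 2) * n) :=
        mul_le_mul_of_nonneg_left hAge hCpos.le
      have heqq : C * ((min l 1 / 2) * n) = (max l 1 + 1) * n := by
        rw [hC]
        field_simp
      linarith [hBle]
    calc ((B - A : ℕ) : ℝ) * (ρ' / A) ≤ (B:ℝ) * (ρ' / A) := by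
          apply mul_le_mul_of_nonneg_right hBA (by positivity)
      _ = ρ' * ((B:ℝ) / A) := by ring
      _ ≤ ρ' * C := mul_le_mul_of_nonneg_left hdivC hρ'pos.le
  have : ρ' * C = ρ / 2 := by
    rw [hρ']; field_simp
  calc ‖(∑ i ∈ Finset.range m, c i) - ∑ i ∈ Finset.range n, c i‖
      = |(∑ i ∈ Finset.range m, c i) - ∑ i ∈ Finset.range n, c i| := rfl
    _ ≤ ρ/2 := by linarith [hdiff.trans (hsum.trans hfinal)]
    _ < ρ := by linarith

/-- If `1 - g(f^{∘n}(0)) = (1 + ε(n))·δ/n` with `ε(n) → 0`, `δ > 0` and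
`0 < g(f^{∘i}(0)) < 1`, then there is a slowly varying `ℓ*` with
`∏_{0 ≤ i < n} g(f^{∘i}(0)) ∼ ℓ*(n) n^{-δ}`. -/
theorem slowly_varying_product_asymptotics
    (f g : ℝ → ℝ) (δ : ℝ) (hδ : 0 < δ)
    (hiter : ∀ i : ℕ, f^[i] 0 ∈ Set.Ico (0:ℝ) 1)
    (hmono : Monotone fun i : ℕ => f^[i] 0)
    (htend : Tendsto (fun i : ℕ => f^[i] 0) atTop (nhds 1))
    (hbound : ∀ i : ℕ, 0 < g (f^[i] 0) ∧ g (f^[i] 0) < 1)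
    (ε : ℕ → ℝ) (hε : Tendsto ε atTop (nhds 0))
    (heq : ∀ n : ℕ, 1 ≤ n → 1 - g (f^[n] 0) = (1 + ε n) * δ / (n : ℝ)) :
    ∃ L : ℕ → ℝ, (∀ n, 0 < L n) ∧
      (∀ l : ℝ, 0 < l →
        Tendsto (fun n : ℕ => L ⌊l * (n : ℝ)⌋₊ / L n) atTop (nhds 1)) ∧
      Tendsto (fun n : ℕ =>
          (∏ i ∈ Finset.range n, g (f^[i] 0)) / (L n * (n : ℝ) ^ (-δ)))
        atTop (nhds 1) := by
  set a : ℕ → ℝ := fun i => g (f^[i] 0) with ha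
  have hapos : ∀ i, 0 < a i := fun i => (hbound i).1
  have halt : ∀ i, a i < 1 := fun i => (hbound i).2
  have hPpos : ∀ n, 0 < ∏ i ∈ Finset.range n, a i :=
    fun n => Finset.prod_pos fun i _ => hapos i
  set L : ℕ → ℝ := fun n => (∏ i ∈ Finset.range n, a i) * (max (n:ℝ) 1) ^ δ with hL
  have hmax1 : ∀ n : ℕ, (0:ℝ) < max (n:ℝ) 1 :=
    fun n => lt_of_lt_of_le one_pos (le_max_right _ _)
  have hLpos : ∀ n, 0 < L n :=
    fun n => mul_pos (hPpos n) (Real.rpow_pos_of_pos (hmax1 n) δ)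
  -- the auxiliary sequence `x i = 1 - a i`
  set x : ℕ → ℝ := fun i => 1 - a i with hxdef
  have hxpos : ∀ i, 0 < x i := fun i => sub_pos.mpr (halt i)
  have hxlt : ∀ i, x i < 1 := fun i => by
    have := hapos i; simp only [hxdef]; linarith
  -- `c i = log (a i) + δ / i` satisfies `i * c i → 0`
  set c : ℕ → ℝ := fun i => Real.log (a i) + δ / (i:ℝ) with hcdef
  have hkey : Tendsto (fun i : ℕ => (i:ℝ) * c i) atTop (nhds 0) := by
    have h1 : Tendsto (fun i : ℕ => (1 + ε i) * δ) atTop (nhds δ) := by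
      have := (tendsto_const_nhds (x := (1:ℝ)) (f := atTop)).add hε
      simpa using this.mul_const δ
    have h2 : Tendsto (fun i : ℕ => ((i:ℝ))⁻¹) atTop (nhds 0) :=
      tendsto_inv_atTop_zero.comp tendsto_natCast_atTop_atTop
    have hx0 : Tendsto x atTop (nhds 0) := by
      have := h1.mul h2
      rw [mul_zero] at this
      refine this.congr' ?_
      filter_upwards [eventually_ge_atTop 1] with i hi
      rw [hxdef]
      simp only
      rw [heq i hi, div_eq_mul_inv]
    have hix : Tendsto (fun i : ℕ => (i:ℝ) * x i) atTop (nhds δ) := by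
      refine h1.congr' ?_
      filter_upwards [eventually_ge_atTop 1] with i hi
      have hine : ((i:ℝ)) ≠ 0 := by positivity
      simp only [hxdef]
      rw [heq i hi]
      field_simp
    have hxslope : Tendsto (fun i : ℕ => Real.log (1 - x i) / x i) atTop (nhds (-1)) := by
      refine aux_log_one_sub_slope.comp ?_
      rw [tendsto_nhdsWithin_iff]
      exact ⟨hx0, Eventually.of_forall fun i => by
        simp only [Set.mem_compl_iff, Set.mem_singleton_iff]
        exact (hxpos i).ne'⟩
    have hprod : Tendsto (fun i : ℕ => ((i:ℝ) * x i) * (Real.log (1 - x i) / x i) + δ)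
        atTop (nhds 0) := by
      have := (hix.mul hxslope).add_const δ
      simpa using this
    refine hprod.congr' ?_
    filter_upwards [eventually_ge_atTop 1] with i hi
    have hine : ((i:ℝ)) ≠ 0 := by positivity
    have hxne : x i ≠ 0 := (hxpos i).ne'
    have h1x : (1:ℝ) - x i = a i := by rw [hxdef]; ring
    rw [h1x, hcdef]
    simp only
    field_simp
  -- `T n = log (L n)` for `n ≥ 1`
  set T : ℕ → ℝ := fun n => (∑ i ∈ Finset.range n, c i)
      + δ * (Real.log n - ∑ i ∈ Finset.range n, ((i:ℝ))⁻¹) with hT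
  have hTlog : ∀ n : ℕ, 1 ≤ n → Real.log (L n) = T n := by
    intro n hn
    have hnpos : (0:ℝ) < n := by exact_mod_cast hn
    have hmaxn : max (n:ℝ) 1 = n := max_eq_left (by exact_mod_cast hn)
    have hlogL : Real.log (L n) = (∑ i ∈ Finset.range n, Real.log (a i)) + δ * Real.log n := by
      rw [hL]
      simp only
      rw [hmaxn, Real.log_mul (hPpos n).ne' (Real.rpow_pos_of_pos hnpos δ).ne',
        Real.log_rpow hnpos, Real.log_prod fun i _ => (hapos i).ne']
    have hsum : ∑ i ∈ Finset.range n, c i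
        = (∑ i ∈ Finset.range n, Real.log (a i)) + δ * ∑ i ∈ Finset.range n, ((i:ℝ))⁻¹ := by
      rw [hcdef]
      simp only
      rw [Finset.sum_add_distrib, Finset.mul_sum]
      simp [div_eq_mul_inv]
    rw [hlogL, hT]
    simp only
    rw [hsum]
    ring
  refine ⟨L, hLpos, ?_, ?_⟩
  · -- slowly varying
    intro l hl
    have hm : Tendsto (fun n : ℕ => ⌊l * (n:ℝ)⌋₊) atTop atTop :=
      tendsto_nat_floor_atTop.comp (Tendsto.const_mul_atTop hl tendsto_natCast_atTop_atTop)
    have hD : Tendsto (fun n : ℕ => T ⌊l * (n:ℝ)⌋₊ - T n) atTop (nhds 0) := by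
      have h1 := aux_sum_diff c hkey l hl
      have h2 : Tendsto (fun n : ℕ =>
          δ * (((∑ i ∈ Finset.range n, ((i:ℝ))⁻¹) - Real.log n)
            - ((∑ i ∈ Finset.range ⌊l * (n:ℝ)⌋₊, ((i:ℝ))⁻¹) - Real.log ⌊l * (n:ℝ)⌋₊)))
          atTop (nhds 0) := by
        have := (aux_G.sub (aux_G.comp hm)).const_mul δ
        simpa using this
      have := h1.add h2
      rw [add_zero] at this
      refine this.congr fun n => ?_
      rw [hT]
      simp only [Function.comp]
      ring
    have hev : ∀ᶠ n : ℕ in atTop,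
        Real.exp (T ⌊l * (n:ℝ)⌋₊ - T n) = L ⌊l * (n:ℝ)⌋₊ / L n := by
      filter_upwards [eventually_ge_atTop 1, hm.eventually (eventually_ge_atTop 1)]
        with n h1 h2
      rw [Real.exp_sub, ← hTlog _ h2, ← hTlog _ h1,
        Real.exp_log (hLpos _), Real.exp_log (hLpos _)]
    have hexp : Tendsto (fun n : ℕ => Real.exp (T ⌊l * (n:ℝ)⌋₊ - T n)) atTop (nhds 1) := by
      have := (Real.continuous_exp.tendsto 0).comp hD
      simpa [Function.comp_def] using this
    exact hexp.congr' hev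
  · -- ratio equals 1 eventually
    have hev : ∀ᶠ n : ℕ in atTop,
        (1:ℝ) = (∏ i ∈ Finset.range n, a i) / (L n * (n:ℝ) ^ (-δ)) := by
      filter_upwards [eventually_ge_atTop 1] with n hn
      have hnpos : (0:ℝ) < n := by exact_mod_cast hn
      have hmaxn : max (n:ℝ) 1 = n := max_eq_left (by exact_mod_cast hn)
      rw [hL]
      simp only
      rw [hmaxn, mul_assoc, ← Real.rpow_add hnpos, add_neg_cancel, Real.rpow_zero,
        mul_one, div_self (hPpos n).ne']
    exact tendsto_const_nhds.congr' hev
end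

section
/- Let E be a metric space, O ⊂ E open with closure C, and f_n → f in the Skorokhod J₁ topology on càdlàg paths [0,∞) → E. If T_O(f) ≤ min{T_C(f), T_C⁻(f)}, T_O(f) < ∞, and f(T_O(f)) = f(T_O(f)−), then T_O(f_n) < ∞ for all sufficiently large n and (T_O(f_n), f_n(T_O(f_n))) → (T_O(f), f(T_O(f))) in [0,∞) × E. -/
open Filter Set

/-- First entrance time into `U` of a path `f : [0,∞) → E`, valued in `[0,∞]`. -/
noncomputable def hitTime {E : Type*} (f : ℝ → E) (U : Set E) : ENNReal :=
  sInf (ENNReal.ofReal '' {t : ℝ | 0 ≤ t ∧ f t ∈ U})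

lemma hitTime_le {E : Type*} {f : ℝ → E} {U : Set E} {t : ℝ} (ht : 0 ≤ t) (hU : f t ∈ U) :
    hitTime f U ≤ ENNReal.ofReal t :=
  sInf_le ⟨t, ⟨ht, hU⟩, rfl⟩

lemma exists_of_hitTime_lt {E : Type*} {f : ℝ → E} {U : Set E} {x : ENNReal}
    (h : hitTime f U < x) : ∃ t : ℝ, 0 ≤ t ∧ f t ∈ U ∧ ENNReal.ofReal t < x := by
  obtain ⟨a, ⟨t, ⟨ht, hU⟩, rfl⟩, hax⟩ := sInf_lt_iff.1 h
  exact ⟨t, ht, hU, hax⟩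

lemma continuousAt_of_eq' {E : Type*} [MetricSpace E] {f fl : ℝ → E} {x : ℝ}
    (hf_r : ContinuousWithinAt f (Set.Ici x) x)
    (hf_l : Tendsto f (nhdsWithin x (Set.Iio x)) (nhds (fl x)))
    (heq : f x = fl x) : ContinuousAt f x := by
  rw [ContinuousAt, ← nhdsLT_sup_nhdsGE x, tendsto_sup]
  exact ⟨heq ▸ hf_l, hf_r⟩

lemma cadlag_bounded {E : Type*} [MetricSpace E] {g : ℝ → E}
    (hr : ∀ t : ℝ, 0 ≤ t → ContinuousWithinAt g (Set.Ici t) t)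
    (hl : ∀ t : ℝ, 0 < t → ∃ y : E, Tendsto g (nhdsWithin t (Set.Iio t)) (nhds y))
    (T : ℝ) : ∃ R : ℝ, ∀ t ∈ Set.Icc (0:ℝ) T, dist (g t) (g 0) ≤ R := by
  have := isCompact_Icc (a := (0:ℝ)) (b := T)
  refine this.induction_on (p := fun s => ∃ R : ℝ, ∀ t ∈ s, dist (g t) (g 0) ≤ R)
    ⟨0, by simp⟩ (fun s t hst ⟨R, hR⟩ => ⟨R, fun u hu => hR u (hst hu)⟩)
    (fun s t ⟨R1, h1⟩ ⟨R2, h2⟩ => ⟨max R1 R2, fun u hu => by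
      rcases hu with hu | hu
      · exact (h1 u hu).trans (le_max_left _ _)
      · exact (h2 u hu).trans (le_max_right _ _)⟩) ?_
  intro x hx
  have hx0 : 0 ≤ x := hx.1
  rcases eq_or_lt_of_le hx0 with h0 | h0
  · have hev : ∀ᶠ y in nhdsWithin x (Set.Ici x), dist (g y) (g x) < 1 :=
      (hr x hx0).tendsto (Metric.ball_mem_nhds _ one_pos)
    refine ⟨{y | dist (g y) (g x) < 1}, ?_, ⟨dist (g x) (g 0) + 1, fun u hu => ?_⟩⟩
    · refine nhdsWithin_mono x ?_ hev
      intro y hy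
      simp only [Set.mem_Icc] at hy
      exact h0 ▸ hy.1
    · calc dist (g u) (g 0) ≤ dist (g u) (g x) + dist (g x) (g 0) := dist_triangle _ _ _
        _ ≤ dist (g x) (g 0) + 1 := by
          have hu' : dist (g u) (g x) < 1 := hu; linarith
  · obtain ⟨y₀, hy₀⟩ := hl x h0
    have hev_r : ∀ᶠ y in nhdsWithin x (Set.Ici x), dist (g y) (g x) < 1 :=
      (hr x hx0).tendsto (Metric.ball_mem_nhds _ one_pos)
    have hev_l : ∀ᶠ y in nhdsWithin x (Set.Iio x), dist (g y) (y₀) < 1 :=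
      hy₀ (Metric.ball_mem_nhds _ one_pos)
    refine ⟨{y | dist (g y) (g x) < 1 ∨ dist (g y) y₀ < 1}, ?_,
      ⟨max (dist (g x) (g 0)) (dist y₀ (g 0)) + 1, fun u hu => ?_⟩⟩
    · apply mem_nhdsWithin_of_mem_nhds
      rw [← nhdsLT_sup_nhdsGE x, mem_sup]
      exact ⟨hev_l.mono fun y hy => Or.inr hy, hev_r.mono fun y hy => Or.inl hy⟩
    · rcases hu with hu | hu
      · calc dist (g u) (g 0) ≤ dist (g u) (g x) + dist (g x) (g 0) := dist_triangle _ _ _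
          _ ≤ max (dist (g x) (g 0)) (dist y₀ (g 0)) + 1 := by
            have := le_max_left (dist (g x) (g 0)) (dist y₀ (g 0)); linarith
      · calc dist (g u) (g 0) ≤ dist (g u) y₀ + dist y₀ (g 0) := dist_triangle _ _ _
          _ ≤ max (dist (g x) (g 0)) (dist y₀ (g 0)) + 1 := by
            have := le_max_right (dist (g x) (g 0)) (dist y₀ (g 0)); linarith

lemma finite_jumps {E : Type*} [MetricSpace E] {f fl : ℝ → E}
    (hf_r : ∀ t : ℝ, 0 ≤ t → ContinuousWithinAt f (Set.Ici t) t)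
    (hf_l : ∀ t : ℝ, 0 < t → Tendsto f (nhdsWithin t (Set.Iio t)) (nhds (fl t)))
    {a b ε : ℝ} (ha : 0 < a) (hε : 0 < ε) :
    {x ∈ Set.Icc a b | ε ≤ dist (f x) (fl x)}.Finite := by
  by_contra hinf
  rw [← Set.Infinite] at hinf
  set D := {x ∈ Set.Icc a b | ε ≤ dist (f x) (fl x)} with hD
  obtain ⟨u, huinj⟩ := hinf.natEmbedding _
  have huD : ∀ k, (u k : ℝ) ∈ D := fun k => (u k).2
  have humem : ∀ k, (u k : ℝ) ∈ Set.Icc a b := fun k => (huD k).1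
  obtain ⟨x₀, hx₀, ψ, hψm, hψt⟩ := isCompact_Icc.tendsto_subseq humem
  have hx₀a : a ≤ x₀ := hx₀.1
  have hx₀pos : 0 < x₀ := lt_of_lt_of_le ha hx₀a
  set v : ℕ → ℝ := fun k => (u (ψ k) : ℝ) with hv
  have hvD : ∀ k, v k ∈ D := fun k => huD (ψ k)
  have hvne : ∀ᶠ k in atTop, v k ≠ x₀ := by
    have hfin : {k | v k = x₀}.Finite := by
      apply Set.Subsingleton.finite
      intro k1 h1 k2 h2
      have : u (ψ k1) = u (ψ k2) := Subtype.ext (h1.trans h2.symm)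
      exact hψm.injective (huinj this)
    have := hfin.eventually_cofinite_notMem
    rw [Nat.cofinite_eq_atTop] at this
    exact this.mono (by intro k hk; simpa using hk)
  set η := ε / 3 with hη
  have hηpos : 0 < η := by positivity
  by_cases hside : ∀ᶠ k in atTop, v k < x₀
  · have hev_l : ∀ᶠ y in nhdsWithin x₀ (Set.Iio x₀), dist (f y) (fl x₀) < η :=
      (hf_l x₀ hx₀pos) (Metric.ball_mem_nhds _ hηpos)
    obtain ⟨l, hl, hsub⟩ :=
      (mem_nhdsLT_iff_exists_Ioo_subset' (sub_lt_self x₀ one_pos)).1 hev_l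
    set l' := max l (x₀ / 2) with hl'
    have hl'lt : l' < x₀ := max_lt hl (by linarith)
    have hl'pos : 0 < l' := lt_of_lt_of_le (by linarith) (le_max_right _ _)
    have h1 : ∀ᶠ k in atTop, l' < v k := hψt.eventually (eventually_gt_nhds hl'lt)
    obtain ⟨k, hk1, hk2⟩ := (h1.and hside).exists
    set w := v k with hw
    have hwIoo : w ∈ Set.Ioo l x₀ := ⟨lt_of_le_of_lt (le_max_left _ _) hk1, hk2⟩
    have hd1 : dist (f w) (fl x₀) < η := hsub hwIoo
    have hwpos : 0 < w := lt_trans hl'pos hk1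
    have hd2 : dist (fl w) (fl x₀) ≤ η := by
      have hev : ∀ᶠ y in nhdsWithin w (Set.Iio w), dist (f y) (fl x₀) < η := by
        have hIoi : Set.Ioo l' w ∈ nhdsWithin w (Set.Iio w) := by
          rw [mem_nhdsLT_iff_exists_Ioo_subset' hk1]
          exact ⟨l', hk1, subset_rfl⟩
        filter_upwards [hIoi] with y hy
        exact hsub ⟨lt_of_le_of_lt (le_max_left _ _) hy.1, lt_trans hy.2 hk2⟩
      have htd : Tendsto (fun y => dist (f y) (fl x₀)) (nhdsWithin w (Set.Iio w))
          (nhds (dist (fl w) (fl x₀))) :=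
        (hf_l w hwpos).dist tendsto_const_nhds
      exact le_of_tendsto htd (hev.mono fun y hy => le_of_lt hy)
    have : ε ≤ dist (f w) (fl w) := (hvD k).2
    have : dist (f w) (fl w) ≤ dist (f w) (fl x₀) + dist (fl x₀) (fl w) := dist_triangle _ _ _
    rw [dist_comm (fl x₀) (fl w)] at this
    linarith [(hvD k).2]
  · rw [Filter.not_eventually] at hside
    have hside' : ∃ᶠ k in atTop, x₀ < v k := by
      have := hside.and_eventually hvne
      apply this.mono
      rintro k ⟨h1, h2⟩
      rcases lt_or_eq_of_le (not_lt.1 h1) with h | h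
      · exact h
      · exact absurd h.symm h2
    have hev_r : ∀ᶠ y in nhdsWithin x₀ (Set.Ici x₀), dist (f y) (f x₀) < η :=
      (hf_r x₀ hx₀pos.le).tendsto (Metric.ball_mem_nhds _ hηpos)
    obtain ⟨d, hd, hsub⟩ :=
      (mem_nhdsGE_iff_exists_Ico_subset' (lt_add_one x₀)).1 hev_r
    have h1 : ∀ᶠ k in atTop, v k < d := hψt.eventually (eventually_lt_nhds hd)
    obtain ⟨k, hk1, hk2⟩ := (hside'.and_eventually h1).exists
    set w := v k with hw
    have hwmem : w ∈ Set.Ico x₀ d := ⟨le_of_lt hk1, hk2⟩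
    have hd1 : dist (f w) (f x₀) < η := hsub hwmem
    have hwpos : 0 < w := lt_trans hx₀pos hk1
    have hd2 : dist (fl w) (f x₀) ≤ η := by
      have hev : ∀ᶠ y in nhdsWithin w (Set.Iio w), dist (f y) (f x₀) < η := by
        have hIoi : Set.Ioo x₀ w ∈ nhdsWithin w (Set.Iio w) := by
          rw [mem_nhdsLT_iff_exists_Ioo_subset' hk1]
          exact ⟨x₀, hk1, subset_rfl⟩
        filter_upwards [hIoi] with y hy
        exact hsub ⟨le_of_lt hy.1, lt_trans hy.2 hk2⟩
      have htd : Tendsto (fun y => dist (f y) (f x₀)) (nhdsWithin w (Set.Iio w))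
          (nhds (dist (fl w) (f x₀))) :=
        (hf_l w hwpos).dist tendsto_const_nhds
      exact le_of_tendsto htd (hev.mono fun y hy => le_of_lt hy)
    have htri : dist (f w) (fl w) ≤ dist (f w) (f x₀) + dist (f x₀) (fl w) := dist_triangle _ _ _
    rw [dist_comm (f x₀) (fl w)] at htri
    linarith [(hvD k).2]

lemma exists_continuity_point {E : Type*} [MetricSpace E] {f fl : ℝ → E}
    (hf_r : ∀ t : ℝ, 0 ≤ t → ContinuousWithinAt f (Set.Ici t) t)
    (hf_l : ∀ t : ℝ, 0 < t → Tendsto f (nhdsWithin t (Set.Iio t)) (nhds (fl t)))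
    {a b : ℝ} (ha : 0 < a) (hab : a < b) :
    ∃ x : ℝ, a < x ∧ x < b ∧ ContinuousAt f x := by
  set D := {x ∈ Set.Ioo a b | f x ≠ fl x} with hD
  have hDc : D.Countable := by
    have hsub : D ⊆ ⋃ k : ℕ, {x ∈ Set.Icc a b | 1/(k+1 : ℝ) ≤ dist (f x) (fl x)} := by
      rintro x ⟨hx, hne⟩
      have hd : 0 < dist (f x) (fl x) := dist_pos.2 hne
      obtain ⟨k, hk⟩ := exists_nat_one_div_lt hd
      exact Set.mem_iUnion.2 ⟨k, ⟨Set.Ioo_subset_Icc_self hx, le_of_lt hk⟩⟩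
    exact Set.Countable.mono hsub (Set.countable_iUnion fun k =>
      (finite_jumps hf_r hf_l ha (by positivity)).countable)
  have hdense : Dense Dᶜ := Set.Countable.dense_compl ℝ hDc
  obtain ⟨x, hxo, hxc⟩ := hdense.exists_mem_open isOpen_Ioo (Set.nonempty_Ioo.2 hab)
  refine ⟨x, hxc.1, hxc.2, ?_⟩
  have hxpos : 0 < x := lt_trans ha hxc.1
  have heq : f x = fl x := by
    by_contra hne
    exact hxo ⟨hxc, hne⟩
  exact continuousAt_of_eq' (hf_r x hxpos.le) (hf_l x hxpos) heq

/-- If moreover `T_O(f) < ∞` and `f` is continuous at `T_O(f)` (i.e.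
`f(T_O(f)) = f(T_O(f)−)`), then `T_O(f_n) < ∞` for all large `n` and
`(T_O(f_n), f_n(T_O(f_n))) → (T_O(f), f(T_O(f)))` in `[0,∞) × E`. -/
theorem hitting_time_and_value_convergence
    {E : Type*} [MetricSpace E] (O : Set E) (hO : IsOpen O)
    (f fl : ℝ → E) (fN : ℕ → ℝ → E)
    (hf_r : ∀ t : ℝ, 0 ≤ t → ContinuousWithinAt f (Set.Ici t) t)
    (hf_l : ∀ t : ℝ, 0 < t → Tendsto f (nhdsWithin t (Set.Iio t)) (nhds (fl t)))
    (hfl0 : fl 0 = f 0)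
    (hfN_r : ∀ n : ℕ, ∀ t : ℝ, 0 ≤ t → ContinuousWithinAt (fN n) (Set.Ici t) t)
    (hfN_l : ∀ n : ℕ, ∀ t : ℝ, 0 < t →
      ∃ y : E, Tendsto (fN n) (nhdsWithin t (Set.Iio t)) (nhds y))
    (hJ1 : ∀ T : ℝ, 0 < T → ContinuousAt f T →
      ∃ lam : ℕ → ℝ → ℝ,
        (∀ n : ℕ, lam n 0 = 0 ∧ lam n T = T ∧
          StrictMonoOn (lam n) (Set.Icc 0 T) ∧
          ContinuousOn (lam n) (Set.Icc 0 T) ∧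
          Set.BijOn (lam n) (Set.Icc 0 T) (Set.Icc 0 T)) ∧
        Tendsto (fun n : ℕ => ⨆ t : Set.Icc (0:ℝ) T,
            max |lam n t.1 - t.1| (dist (fN n t.1) (f (lam n t.1))))
          atTop (nhds 0))
    (hhyp : hitTime f O ≤ min (hitTime f (closure O)) (hitTime fl (closure O)))
    (hfin : hitTime f O < ⊤)
    (hcont : f ((hitTime f O).toReal) = fl ((hitTime f O).toReal)) :
    (∀ᶠ n in atTop, hitTime (fN n) O < ⊤)
    ∧ Tendsto (fun n : ℕ =>
          ((hitTime (fN n) O).toReal, fN n ((hitTime (fN n) O).toReal)))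
        atTop (nhds ((hitTime f O).toReal, f ((hitTime f O).toReal))) := by
  classical
  set τ : ℝ := (hitTime f O).toReal with hτdef
  have hτ0 : 0 ≤ τ := ENNReal.toReal_nonneg
  have hofReal : ENNReal.ofReal τ = hitTime f O := ENNReal.ofReal_toReal hfin.ne
  obtain ⟨s₀, hs₀0, hs₀O, -⟩ := exists_of_hitTime_lt hfin
  have hOne : O.Nonempty := ⟨f s₀, hs₀O⟩
  -- continuity of f at τ within Ici 0
  have hcτ : Tendsto f (nhdsWithin τ (Set.Ici 0)) (nhds (f τ)) := by
    rcases eq_or_lt_of_le hτ0 with h0 | h0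
    · rw [← h0]
      exact (hf_r 0 le_rfl).tendsto
    · exact (continuousAt_of_eq' (hf_r τ hτ0) (hf_l τ h0) hcont).continuousWithinAt
  -- fix a continuity point T' > τ
  obtain ⟨T', hT'1, hT'2, hT'cont⟩ := exists_continuity_point hf_r hf_l
    (show (0:ℝ) < τ + 1 by linarith) (show τ + 1 < τ + 2 by linarith)
  have hτT' : τ < T' := by linarith
  have hT'pos : 0 < T' := by linarith
  obtain ⟨lam, hlam, hM0⟩ := hJ1 T' hT'pos hT'cont
  set M : ℕ → ℝ := fun n => ⨆ t : Set.Icc (0:ℝ) T',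
      max |lam n t.1 - t.1| (dist (fN n t.1) (f (lam n t.1))) with hMdef
  have hM : Tendsto M atTop (nhds 0) := hM0
  -- boundedness: the sup is over a bounded family
  obtain ⟨Rf, hRf⟩ := cadlag_bounded hf_r (fun t ht => ⟨fl t, hf_l t ht⟩) T'
  have hbdd : ∀ n, BddAbove (Set.range fun t : Set.Icc (0:ℝ) T' =>
      max |lam n t.1 - t.1| (dist (fN n t.1) (f (lam n t.1)))) := by
    intro n
    obtain ⟨Rn, hRn⟩ := cadlag_bounded (hfN_r n) (hfN_l n) T'
    refine ⟨max (2 * T') (Rn + dist (fN n 0) (f 0) + Rf), ?_⟩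
    rintro y ⟨⟨t, ht⟩, rfl⟩
    have hglt : lam n t ∈ Set.Icc (0:ℝ) T' := (hlam n).2.2.2.2.mapsTo ht
    apply max_le
    · refine le_max_of_le_left ?_
      rw [abs_sub_le_iff]
      constructor
      · have := hglt.2; have := ht.1; have := hglt.1; have := ht.2; linarith
      · have := hglt.2; have := ht.1; have := hglt.1; have := ht.2; linarith
    · refine le_max_of_le_right ?_
      calc dist (fN n t) (f (lam n t))
          ≤ dist (fN n t) (fN n 0) + dist (fN n 0) (f 0) + dist (f 0) (f (lam n t)) :=
            dist_triangle4 _ _ _ _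
        _ ≤ Rn + dist (fN n 0) (f 0) + Rf := by
            have h1 := hRn t ht
            have h2 := hRf (lam n t) hglt
            rw [dist_comm (f 0) (f (lam n t))]
            linarith
  have hkey : ∀ n : ℕ, ∀ t : ℝ, t ∈ Set.Icc (0:ℝ) T' →
      max |lam n t - t| (dist (fN n t) (f (lam n t))) ≤ M n :=
    fun n t ht => le_ciSup (hbdd n) (⟨t, ht⟩ : Set.Icc (0:ℝ) T')
  -- STEP 1: upper bound
  have hupper : ∀ ε : ℝ, 0 < ε → ∀ᶠ n in atTop, ∃ t : ℝ, 0 ≤ t ∧ t < τ + ε ∧ fN n t ∈ O := by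
    intro ε hε
    set ε' := min ε 1 with hε'def
    have hε' : 0 < ε' := lt_min hε one_pos
    have hε'le : ε' ≤ ε := min_le_left _ _
    have hε'1 : ε' ≤ 1 := min_le_right _ _
    have h1 : hitTime f O < ENNReal.ofReal (τ + ε'/2) := by
      rw [← hofReal]
      exact (ENNReal.ofReal_lt_ofReal_iff (by linarith)).2 (by linarith)
    obtain ⟨s, hs0, hsO, hslt⟩ := exists_of_hitTime_lt h1
    have hs : s < τ + ε'/2 := by
      by_contra hcon
      exact absurd hslt (not_lt.2 (ENNReal.ofReal_le_ofReal (not_lt.1 hcon)))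
    have hev : ∀ᶠ y in nhdsWithin s (Set.Ici s), f y ∈ O :=
      (hf_r s hs0).tendsto (hO.mem_nhds hsO)
    obtain ⟨d, hd, hsub⟩ :=
      (mem_nhdsGE_iff_exists_Ico_subset' (lt_add_one s)).1 hev
    have hsd : s < d := hd
    set s' := min ((s + d)/2) (s + ε'/4) with hs'def
    have hs'gt : s ≤ s' := le_min (by linarith) (by linarith)
    have hs'd : s' < d := lt_of_le_of_lt (min_le_left _ _) (by linarith)
    have hs'lt : s' < τ + ε' := lt_of_le_of_lt (min_le_right _ _) (by linarith)
    have hs'0 : 0 ≤ s' := le_trans hs0 hs'gt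
    have hs'T' : s' ≤ T' := by
      have : τ + ε' ≤ τ + 1 := by linarith
      linarith
    have hs'O : f s' ∈ O := hsub ⟨hs'gt, hs'd⟩
    obtain ⟨r, hr, hball⟩ := Metric.isOpen_iff.1 hO (f s') hs'O
    have hc : (0:ℝ) < min r (τ + ε' - s') := lt_min hr (by linarith)
    filter_upwards [hM.eventually (eventually_lt_nhds hc)] with n hn
    obtain ⟨t, htIcc, hteq⟩ := (hlam n).2.2.2.2.surjOn ⟨hs'0, hs'T'⟩
    have hk := hkey n t htIcc
    have hk1 : |lam n t - t| ≤ M n := le_trans (le_max_left _ _) hk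
    have hk2 : dist (fN n t) (f (lam n t)) ≤ M n := le_trans (le_max_right _ _) hk
    rw [hteq] at hk1 hk2
    refine ⟨t, htIcc.1, ?_, ?_⟩
    · have h3 : M n < τ + ε' - s' := lt_of_lt_of_le hn (min_le_right _ _)
      have h4 : t - s' ≤ |s' - t| := by rw [abs_sub_comm]; exact le_abs_self _
      have : t < τ + ε' := by linarith
      linarith
    · apply hball
      rw [Metric.mem_ball]
      exact lt_of_le_of_lt hk2 (lt_of_lt_of_le hn (min_le_left _ _))
  -- STEP 2: eventual finiteness
  have hfinN : ∀ᶠ n in atTop, hitTime (fN n) O < ⊤ := by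
    filter_upwards [hupper 1 one_pos] with n hn
    obtain ⟨t, ht0, -, htO⟩ := hn
    exact lt_of_le_of_lt (hitTime_le ht0 htO) ENNReal.ofReal_lt_top
  -- upper bound in real form
  have huT : ∀ ε : ℝ, 0 < ε → ∀ᶠ n in atTop, (hitTime (fN n) O).toReal < τ + ε := by
    intro ε hε
    filter_upwards [hupper ε hε] with n hn
    obtain ⟨t, ht0, htlt, htO⟩ := hn
    calc (hitTime (fN n) O).toReal
        ≤ (ENNReal.ofReal t).toReal :=
          ENNReal.toReal_mono ENNReal.ofReal_ne_top (hitTime_le ht0 htO)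
      _ = t := ENNReal.toReal_ofReal ht0
      _ < τ + ε := htlt
  -- STEP 3: lower bound
  have hlower : ∀ c : ℝ, 0 ≤ c → c < τ → ∀ᶠ n in atTop, ENNReal.ofReal c < hitTime (fN n) O := by
    intro c hc0 hcτ
    by_contra hcon
    rw [Filter.not_eventually] at hcon
    have hfreq : ∃ᶠ n in atTop, hitTime (fN n) O ≤ ENNReal.ofReal c :=
      hcon.mono fun n hn => not_lt.1 hn
    obtain ⟨φ, hφm, hφp⟩ := Filter.extraction_of_frequently_atTop hfreq
    set c' := (c + τ)/2 with hc'def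
    have hτpos : 0 < τ := lt_of_le_of_lt hc0 hcτ
    have hc'1 : c < c' := by rw [hc'def]; linarith
    have hc'2 : c' < τ := by rw [hc'def]; linarith
    have hc'0 : 0 < c' := by rw [hc'def]; linarith
    have hc'T' : c' < T' := lt_trans hc'2 hτT'
    have hstep : ∀ k, ∃ t : ℝ, 0 ≤ t ∧ fN (φ k) t ∈ O ∧ t < c' := by
      intro k
      have h1 : hitTime (fN (φ k)) O < ENNReal.ofReal c' :=
        lt_of_le_of_lt (hφp k) ((ENNReal.ofReal_lt_ofReal_iff hc'0).2 hc'1)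
      obtain ⟨t, ht0, htO, htlt⟩ := exists_of_hitTime_lt h1
      refine ⟨t, ht0, htO, ?_⟩
      by_contra hcc
      exact absurd htlt (not_lt.2 (ENNReal.ofReal_le_ofReal (not_lt.1 hcc)))
    choose t ht0 htO htlt using hstep
    have htIcc : ∀ k, t k ∈ Set.Icc (0:ℝ) T' :=
      fun k => ⟨ht0 k, le_of_lt (lt_trans (htlt k) hc'T')⟩
    set s : ℕ → ℝ := fun k => lam (φ k) (t k) with hsdef
    have hsIcc : ∀ k, s k ∈ Set.Icc (0:ℝ) T' :=
      fun k => (hlam (φ k)).2.2.2.2.mapsTo (htIcc k)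
    have hbound1 : ∀ k, |s k - t k| ≤ M (φ k) :=
      fun k => le_trans (le_max_left _ _) (hkey (φ k) (t k) (htIcc k))
    have hbound2 : ∀ k, dist (fN (φ k) (t k)) (f (s k)) ≤ M (φ k) :=
      fun k => le_trans (le_max_right _ _) (hkey (φ k) (t k) (htIcc k))
    have hMφ : Tendsto (fun k => M (φ k)) atTop (nhds 0) := hM.comp hφm.tendsto_atTop
    obtain ⟨σ, hσmem, ψ, hψm, hψt⟩ := isCompact_Icc.tendsto_subseq hsIcc
    have hMφψ : Tendsto (fun k => M (φ (ψ k))) atTop (nhds 0) := hMφ.comp hψm.tendsto_atTop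
    have hσle : σ ≤ c' := by
      have hle : ∀ k, s (ψ k) ≤ c' + M (φ (ψ k)) := by
        intro k
        have h1 := hbound1 (ψ k)
        have h2 := le_abs_self (s (ψ k) - t (ψ k))
        have h3 := htlt (ψ k)
        linarith
      have h4 : Tendsto (fun k => c' + M (φ (ψ k))) atTop (nhds c') := by
        have := tendsto_const_nhds (x := c') (f := atTop (α := ℕ)) |>.add hMφψ
        simpa using this
      exact le_of_tendsto_of_tendsto' hψt h4 hle
    have hσc : σ < τ := lt_of_le_of_lt hσle hc'2
    have hinf0 : Tendsto (fun k => Metric.infDist (f (s (ψ k))) O) atTop (nhds 0) := by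
      apply squeeze_zero (fun k => Metric.infDist_nonneg) _ hMφψ
      intro k
      calc Metric.infDist (f (s (ψ k))) O
          ≤ dist (f (s (ψ k))) (fN (φ (ψ k)) (t (ψ k))) :=
            Metric.infDist_le_dist_of_mem (htO (ψ k))
        _ ≤ M (φ (ψ k)) := by rw [dist_comm]; exact hbound2 (ψ k)
    have hcontr : hitTime f O < hitTime f O := by
      have hlast : ∃ L : E, L ∈ closure O ∧
          (hitTime f (closure O) ≤ ENNReal.ofReal σ ∨
           hitTime fl (closure O) ≤ ENNReal.ofReal σ) := by
        by_cases hcase : ∀ᶠ k in atTop, s (ψ k) < σ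
        · have hσpos : 0 < σ := by
            obtain ⟨k, hk⟩ := hcase.exists
            exact lt_of_le_of_lt (hsIcc (ψ k)).1 hk
          have hflσ : Tendsto (fun k => f (s (ψ k))) atTop (nhds (fl σ)) := by
            apply (hf_l σ hσpos).comp
            rw [tendsto_nhdsWithin_iff]
            exact ⟨hψt, hcase⟩
          have hzero : Metric.infDist (fl σ) O = 0 :=
            tendsto_nhds_unique
              ((Metric.continuous_infDist_pt O).continuousAt.tendsto.comp hflσ) hinf0
          have hmem : fl σ ∈ closure O := (Metric.mem_closure_iff_infDist_zero hOne).2 hzero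
          exact ⟨fl σ, hmem, Or.inr (hitTime_le (le_of_lt hσpos) hmem)⟩
        · rw [Filter.not_eventually] at hcase
          have hfreq2 : ∃ᶠ k in atTop, σ ≤ s (ψ k) := hcase.mono fun k hk => not_lt.1 hk
          obtain ⟨ρ, hρm, hρp⟩ := Filter.extraction_of_frequently_atTop hfreq2
          have hfσ : Tendsto (fun k => f (s (ψ (ρ k)))) atTop (nhds (f σ)) := by
            apply (hf_r σ hσmem.1).tendsto.comp
            rw [tendsto_nhdsWithin_iff]
            exact ⟨hψt.comp hρm.tendsto_atTop, Eventually.of_forall hρp⟩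
          have hzero : Metric.infDist (f σ) O = 0 :=
            tendsto_nhds_unique
              ((Metric.continuous_infDist_pt O).continuousAt.tendsto.comp hfσ)
              (hinf0.comp hρm.tendsto_atTop)
          have hmem : f σ ∈ closure O := (Metric.mem_closure_iff_infDist_zero hOne).2 hzero
          exact ⟨f σ, hmem, Or.inl (hitTime_le hσmem.1 hmem)⟩
      obtain ⟨L, hLmem, hLle⟩ := hlast
      have h5 : hitTime f O ≤ ENNReal.ofReal σ := by
        rcases hLle with h | h
        · exact le_trans (le_trans hhyp (min_le_left _ _)) h
        · exact le_trans (le_trans hhyp (min_le_right _ _)) h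
      have h6 : ENNReal.ofReal σ < hitTime f O := by
        rw [← hofReal]
        exact (ENNReal.ofReal_lt_ofReal_iff hτpos).2 hσc
      exact lt_of_le_of_lt h5 h6
    exact absurd hcontr (lt_irrefl _)
  -- STEP 4: convergence of hitting times
  have hTt : Tendsto (fun n => (hitTime (fN n) O).toReal) atTop (nhds τ) := by
    rw [tendsto_order]
    constructor
    · intro c hc
      rcases lt_or_ge c 0 with h | h
      · exact Eventually.of_forall fun n => lt_of_lt_of_le h ENNReal.toReal_nonneg
      · filter_upwards [hlower c h hc, hfinN] with n h1 h2
        have h3 := (ENNReal.toReal_lt_toReal ENNReal.ofReal_ne_top h2.ne).2 h1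
        rwa [ENNReal.toReal_ofReal h] at h3
    · intro c hc
      filter_upwards [huT (c - τ) (by linarith)] with n hn
      linarith
  -- STEP 5: convergence of values
  have hTIcc : ∀ᶠ n in atTop, (hitTime (fN n) O).toReal ∈ Set.Icc (0:ℝ) T' := by
    filter_upwards [hTt.eventually (eventually_lt_nhds hτT')] with n hn
    exact ⟨ENNReal.toReal_nonneg, le_of_lt hn⟩
  have hTd : Tendsto (fun n => dist ((hitTime (fN n) O).toReal) τ) atTop (nhds 0) :=
    tendsto_iff_dist_tendsto_zero.1 hTt
  have hlamT : Tendsto (fun n => lam n ((hitTime (fN n) O).toReal)) atTop (nhds τ) := by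
    apply tendsto_iff_dist_tendsto_zero.2
    apply squeeze_zero' (Eventually.of_forall fun n => dist_nonneg) _
      (show Tendsto (fun n => M n + dist ((hitTime (fN n) O).toReal) τ) atTop (nhds 0) by
        simpa using hM.add hTd)
    filter_upwards [hTIcc] with n hn
    have h1 : |lam n ((hitTime (fN n) O).toReal) - (hitTime (fN n) O).toReal| ≤ M n :=
      le_trans (le_max_left _ _) (hkey n _ hn)
    calc dist (lam n ((hitTime (fN n) O).toReal)) τ
        ≤ dist (lam n ((hitTime (fN n) O).toReal)) ((hitTime (fN n) O).toReal)
          + dist ((hitTime (fN n) O).toReal) τ := dist_triangle _ _ _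
      _ ≤ M n + dist ((hitTime (fN n) O).toReal) τ := by
          rw [Real.dist_eq]
          exact add_le_add_left h1 _
  have hfval : Tendsto (fun n => f (lam n ((hitTime (fN n) O).toReal))) atTop (nhds (f τ)) := by
    apply hcτ.comp
    rw [tendsto_nhdsWithin_iff]
    refine ⟨hlamT, ?_⟩
    filter_upwards [hTIcc] with n hn
    exact ((hlam n).2.2.2.2.mapsTo hn).1
  have hval : Tendsto (fun n => fN n ((hitTime (fN n) O).toReal)) atTop (nhds (f τ)) := by
    apply tendsto_iff_dist_tendsto_zero.2
    apply squeeze_zero' (Eventually.of_forall fun n => dist_nonneg) _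
      (show Tendsto (fun n => M n + dist (f (lam n ((hitTime (fN n) O).toReal))) (f τ))
          atTop (nhds 0) by
        simpa using hM.add (tendsto_iff_dist_tendsto_zero.1 hfval))
    filter_upwards [hTIcc] with n hn
    have h2 : dist (fN n ((hitTime (fN n) O).toReal))
        (f (lam n ((hitTime (fN n) O).toReal))) ≤ M n :=
      le_trans (le_max_right _ _) (hkey n _ hn)
    calc dist (fN n ((hitTime (fN n) O).toReal)) (f τ)
        ≤ dist (fN n ((hitTime (fN n) O).toReal)) (f (lam n ((hitTime (fN n) O).toReal)))
          + dist (f (lam n ((hitTime (fN n) O).toReal))) (f τ) := dist_triangle _ _ _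
      _ ≤ M n + dist (f (lam n ((hitTime (fN n) O).toReal))) (f τ) :=
          add_le_add_left h2 _
  exact ⟨hfinN, hTt.prodMk_nhds hval⟩
end

section
/- Let f(s) = s + c(1−s)^{1+α} and g(s) = 1 − d(1−s)^α for s ∈ (0,1) with α ∈ (0,1), 0 < d < 1, 0 < c(1+α) < 1, and for 0 < p < 1 let g_p(s) = 1 − p + p·s·g(s). Then f, g and g_p are probability generating functions of distributions on ℕ, i.e., each is given by a power series in s with nonnegative coefficients summing to 1. -/
open Filter Topology

/-! ### Binomial series coefficients `bc α n = (-1)^n (α choose n)` -/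

noncomputable def bc (α : ℝ) : ℕ → ℝ
  | 0 => 1
  | n+1 => bc α n * ((n : ℝ) - α) / (n + 1)

lemma bc_succ (α : ℝ) (n : ℕ) : bc α (n+1) = bc α n * ((n : ℝ) - α) / (n + 1) := rfl

lemma bc_succ_nonpos {α : ℝ} (h0 : 0 < α) (h1 : α < 1) (n : ℕ) : bc α (n+1) ≤ 0 := by
  induction n with
  | zero => simp [bc]; nlinarith
  | succ k ih =>
      rw [bc_succ]
      apply div_nonpos_of_nonpos_of_nonneg
      · exact mul_nonpos_of_nonpos_of_nonneg ih (by push_cast; linarith)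
      · positivity

lemma abs_bc_le_one {α : ℝ} (h0 : 0 < α) (h1 : α < 1) (n : ℕ) : |bc α n| ≤ 1 := by
  induction n with
  | zero => simp [bc]
  | succ k ih =>
      rw [bc_succ, abs_div, abs_mul, div_le_one (by rw [abs_of_nonneg (by positivity)]; positivity)]
      have h2 : |(k:ℝ) - α| ≤ (k:ℝ) + 1 := by
        rw [abs_le]; constructor <;> push_cast <;> [linarith; linarith]
      calc |bc α k| * |(k:ℝ) - α| ≤ 1 * ((k:ℝ)+1) :=
            mul_le_mul ih h2 (abs_nonneg _) zero_le_one
        _ = (k:ℝ) + 1 := one_mul _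
        _ ≤ |(k:ℝ) + 1| := le_abs_self _

noncomputable def U (α : ℝ) (x : ℝ) : ℝ := ∑' n, bc α n * x ^ n

lemma summable_bc_pow {α : ℝ} (h0 : 0 < α) (h1 : α < 1) {s : ℝ} (hs : |s| < 1) :
    Summable (fun n => bc α n * s ^ n) := by
  apply Summable.of_norm_bounded (summable_geometric_of_lt_one (abs_nonneg s) hs)
  intro n
  rw [norm_mul, norm_pow, Real.norm_eq_abs, Real.norm_eq_abs]
  calc |bc α n| * |s| ^ n ≤ 1 * |s| ^ n :=
        mul_le_mul_of_nonneg_right (abs_bc_le_one h0 h1 n) (by positivity)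
    _ = |s| ^ n := one_mul _

lemma summable_aux {r : ℝ} (h0 : 0 ≤ r) (h1 : r < 1) :
    Summable (fun n : ℕ => (n : ℝ) * r ^ (n - 1)) := by
  rw [← summable_nat_add_iff 1]
  have := (summable_pow_mul_geometric_of_norm_lt_one 1 (by rwa [Real.norm_eq_abs, abs_of_nonneg h0] : ‖r‖ < 1)).add
    (summable_geometric_of_lt_one h0 h1)
  apply this.congr
  intro n
  simp
  ring

lemma U_hasDerivAt {α : ℝ} (h0 : 0 < α) (h1 : α < 1) {s : ℝ} (hs : |s| < 1) :
    ∃ D : ℝ, HasDerivAt (U α) D s ∧ HasSum (fun n => bc α n * ((n : ℝ) * s ^ (n - 1))) D := by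
  set r : ℝ := (|s| + 1) / 2 with hr
  have hsr : |s| < r := by rw [hr]; linarith
  have hr0 : 0 ≤ r := le_trans (abs_nonneg s) hsr.le
  have hr1 : r < 1 := by rw [hr]; linarith
  have hu : Summable (fun n : ℕ => (n : ℝ) * r ^ (n - 1)) := summable_aux hr0 hr1
  have ht : IsOpen (Set.Ioo (-r) r) := isOpen_Ioo
  have hmem : s ∈ Set.Ioo (-r) r := by rw [Set.mem_Ioo, ← abs_lt]; exact hsr
  have h0mem : (0:ℝ) ∈ Set.Ioo (-r) r := by
    constructor <;> [linarith [lt_of_le_of_lt (abs_nonneg s) hsr]; linarith [lt_of_le_of_lt (abs_nonneg s) hsr]]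
  have hbound : ∀ (n : ℕ) (y : ℝ), y ∈ Set.Ioo (-r) r →
      ‖bc α n * ((n : ℝ) * y ^ (n - 1))‖ ≤ (n : ℝ) * r ^ (n - 1) := by
    intro n y hy
    rw [Real.norm_eq_abs, abs_mul, abs_mul]
    have hyr : |y| ≤ r := le_of_lt (abs_lt.mpr hy)
    calc |bc α n| * (|(n:ℝ)| * |y ^ (n-1)|) ≤ 1 * (|(n:ℝ)| * r ^ (n-1)) := by
          apply mul_le_mul (abs_bc_le_one h0 h1 n) _ (by positivity) zero_le_one
          apply mul_le_mul_of_nonneg_left _ (abs_nonneg _)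
          rw [abs_pow]
          exact pow_le_pow_left₀ (abs_nonneg y) hyr _
      _ = (n : ℝ) * r ^ (n-1) := by rw [one_mul, Nat.abs_cast]
  have hds : HasDerivAt (fun z => ∑' n, bc α n * z ^ n)
      (∑' n, bc α n * ((n : ℝ) * s ^ (n - 1))) s := by
    apply hasDerivAt_tsum_of_isPreconnected hu ht (convex_Ioo _ _).isPreconnected
      (fun n y _ => (hasDerivAt_pow n y).const_mul (bc α n)) hbound h0mem _ hmem
    exact summable_bc_pow h0 h1 (by simpa using lt_of_le_of_lt (abs_nonneg s) hsr)
  refine ⟨_, hds, Summable.hasSum ?_⟩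
  exact Summable.of_norm_bounded hu (fun n => hbound n s hmem)

lemma phi_hasDerivAt {α : ℝ} (h0 : 0 < α) (h1 : α < 1) {s : ℝ} (hs : |s| < 1) :
    HasDerivAt (fun x => U α x * (1 - x) ^ (-α)) 0 s := by
  obtain ⟨D, hD, hDsum⟩ := U_hasDerivAt h0 h1 hs
  have hs1 : 0 < 1 - s := by cases abs_lt.mp hs; linarith
  -- the ODE: (1 - s) * D = -α * U α s
  have hode : (1 - s) * D + α * U α s = 0 := by
    have hU : HasSum (fun n => bc α n * s ^ n) (U α s) :=
      (summable_bc_pow h0 h1 hs).hasSum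
    have hshift : HasSum (fun n : ℕ => ((n : ℝ) - α) * (bc α n * s ^ n)) D := by
      have h1' : HasSum (fun n => bc α (n+1) * (((n:ℝ)+1) * s ^ n)) D := by
        have := (hasSum_nat_add_iff (f := fun n => bc α n * ((n : ℝ) * s ^ (n - 1))) 1).2
          (by simpa using hDsum)
        apply this.congr_fun
        intro n
        push_cast
        simp
      apply h1'.congr_fun
      intro n
      rw [bc_succ]
      have : ((n:ℝ) + 1) ≠ 0 := by positivity
      field_simp
    have hB : HasSum (fun n : ℕ => (n : ℝ) * (bc α n * s ^ n)) (s * D) := by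
      apply (hDsum.mul_left s).congr_fun
      intro n
      cases n with
      | zero => simp
      | succ k => simp only [Nat.add_sub_cancel, pow_succ]; push_cast; ring
    have hC : HasSum (fun n => α * (bc α n * s ^ n)) (α * U α s) := hU.mul_left α
    have hz : HasSum (fun _ : ℕ => (0:ℝ)) (D - s * D + α * U α s) := by
      have := (hshift.sub hB).add hC
      apply this.congr_fun
      intro n; ring
    have := hz.unique hasSum_zero
    linarith [this]
  have hrp : HasDerivAt (fun x : ℝ => (1 - x) ^ (-α)) (α * (1 - s) ^ (-α - 1)) s := by
    have hb : HasDerivAt (fun x : ℝ => 1 - x) (-1) s := by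
      simpa using (hasDerivAt_id s).const_sub 1
    have := hb.rpow_const (p := -α) (Or.inl (ne_of_gt hs1))
    convert this using 1
    ring
  have := hD.mul hrp
  refine this.congr_deriv ?_
  have key : (1 - s) ^ (-α) = (1 - s) ^ (-α - 1) * (1 - s) := by
    rw [← Real.rpow_add_one (ne_of_gt hs1) (-α-1)]
    norm_num
  rw [key]
  have : D * ((1 - s) ^ (-α - 1) * (1 - s)) + U α s * (α * (1 - s) ^ (-α - 1))
      = (1 - s) ^ (-α - 1) * ((1 - s) * D + α * U α s) := by ring
  rw [this, hode, mul_zero]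

lemma U_zero (α : ℝ) : U α 0 = 1 := by
  rw [U, tsum_eq_single 0 (fun n hn => by rw [zero_pow hn, mul_zero])]
  simp [bc]

lemma U_eq {α : ℝ} (h0 : 0 < α) (h1 : α < 1) {s : ℝ} (hs0 : 0 ≤ s) (hs1 : s < 1) :
    U α s = (1 - s) ^ α := by
  have habs : ∀ x ∈ Set.Icc (0:ℝ) s, |x| < 1 := fun x hx => by
    rw [abs_of_nonneg hx.1]; linarith [hx.2]
  have h1s : 0 < 1 - s := by linarith
  rcases eq_or_lt_of_le hs0 with h | h
  · rw [← h, U_zero]; simp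
  · set φ := fun x => U α x * (1 - x) ^ (-α) with hφ
    have hconst : φ s = φ 0 := by
      have := constant_of_derivWithin_zero (f := φ) (a := 0) (b := s)
        (fun x hx => ((phi_hasDerivAt h0 h1 (habs x hx)).differentiableAt).differentiableWithinAt)
        (fun x hx => ((phi_hasDerivAt h0 h1 (habs x (Set.Ico_subset_Icc_self hx))).hasDerivWithinAt).derivWithin
          ((uniqueDiffOn_Icc h) x (Set.Ico_subset_Icc_self hx)))
      exact this s (Set.right_mem_Icc.mpr hs0)
    have hφ0 : φ 0 = 1 := by
      simp [hφ, U_zero]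
    have hne : (1 - s) ^ α ≠ 0 := ne_of_gt (Real.rpow_pos_of_pos h1s α)
    have h2 : U α s * ((1 - s) ^ α)⁻¹ = 1 := by
      rw [← Real.rpow_neg h1s.le α]
      exact hconst.trans hφ0
    field_simp at h2
    exact h2

lemma hasSum_bc {α : ℝ} (h0 : 0 < α) (h1 : α < 1) {s : ℝ} (hs0 : 0 ≤ s) (hs1 : s < 1) :
    HasSum (fun n => bc α n * s ^ n) ((1 - s) ^ α) := by
  have := (summable_bc_pow h0 h1 (by rwa [abs_of_nonneg hs0])).hasSum
  rwa [show ∑' n, bc α n * s ^ n = U α s from rfl, U_eq h0 h1 hs0 hs1] at this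

/-! ### The nonnegative coefficients `bb α` of `1 - (1-s)^α` -/

noncomputable def bb (α : ℝ) (n : ℕ) : ℝ := if n = 0 then 0 else -bc α n

lemma bb_zero (α : ℝ) : bb α 0 = 0 := rfl

lemma bb_nonneg {α : ℝ} (h0 : 0 < α) (h1 : α < 1) (n : ℕ) : 0 ≤ bb α n := by
  cases n with
  | zero => simp [bb]
  | succ k => simp only [bb, Nat.succ_ne_zero, if_false]; linarith [bc_succ_nonpos h0 h1 k]

lemma bb_one (α : ℝ) : bb α 1 = α := by simp [bb, bc_succ, bc]

lemma bb_antitone {α : ℝ} (h0 : 0 < α) (h1 : α < 1) (n : ℕ) : bb α (n+2) ≤ bb α (n+1) := by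
  have h : bb α (n+2) = bb α (n+1) * (((n:ℝ)+1) - α) / ((n:ℝ)+2) := by
    simp only [bb, Nat.succ_ne_zero, if_false, bc_succ]
    push_cast; ring
  rw [h]
  have hb := bb_nonneg h0 h1 (n+1)
  rw [div_le_iff₀ (by positivity)]
  nlinarith

lemma hasSum_bb_pow {α : ℝ} (h0 : 0 < α) (h1 : α < 1) {s : ℝ} (hs0 : 0 ≤ s) (hs1 : s < 1) :
    HasSum (fun n => bb α n * s ^ n) (1 - (1 - s) ^ α) := by
  have h := (hasSum_ite_eq (0:ℕ) (1:ℝ)).sub (hasSum_bc h0 h1 hs0 hs1)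
  apply h.congr_fun
  intro n
  cases n with
  | zero => simp [bb, bc]
  | succ k => simp [bb, bc]

lemma hasSum_bb {α : ℝ} (h0 : 0 < α) (h1 : α < 1) : HasSum (bb α) 1 := by
  haveI hne : (𝓝[Set.Ioo (0:ℝ) 1] (1:ℝ)).NeBot := right_nhdsWithin_Ioo_neBot zero_lt_one
  have hbound : ∀ N : ℕ, ∑ n ∈ Finset.range N, bb α n ≤ 1 := by
    intro N
    have htd : Tendsto (fun s : ℝ => ∑ n ∈ Finset.range N, bb α n * s ^ n)
        (𝓝[Set.Ioo (0:ℝ) 1] 1) (𝓝 (∑ n ∈ Finset.range N, bb α n)) := by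
      have hc : Continuous (fun s : ℝ => ∑ n ∈ Finset.range N, bb α n * s ^ n) := by
        continuity
      have := hc.tendsto 1
      simp only [one_pow, mul_one] at this
      exact this.mono_left nhdsWithin_le_nhds
    apply le_of_tendsto htd
    filter_upwards [self_mem_nhdsWithin] with s hs
    have hsum := hasSum_bb_pow h0 h1 hs.1.le hs.2
    calc ∑ n ∈ Finset.range N, bb α n * s ^ n ≤ 1 - (1 - s) ^ α := by
          apply sum_le_hasSum _ _ hsum
          intro n _
          exact mul_nonneg (bb_nonneg h0 h1 n) (pow_nonneg hs.1.le n)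
      _ ≤ 1 := by
          have : (0:ℝ) ≤ (1 - s) ^ α := Real.rpow_nonneg (by linarith [hs.2]) α
          linarith
  have hsummable : Summable (bb α) := summable_of_sum_range_le (bb_nonneg h0 h1) hbound
  have hle : ∑' n, bb α n ≤ 1 := Summable.tsum_le_of_sum_range_le hsummable hbound
  have hge : 1 ≤ ∑' n, bb α n := by
    have htd : Tendsto (fun s : ℝ => 1 - (1 - s) ^ α) (𝓝[Set.Ioo (0:ℝ) 1] 1) (𝓝 1) := by
      have h2 : Tendsto (fun s : ℝ => 1 - s) (𝓝 (1:ℝ)) (𝓝 0) := by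
        have hc : Continuous (fun s : ℝ => 1 - s) := continuous_const.sub continuous_id
        have := hc.tendsto (1:ℝ)
        simpa using this
      have h3 : ContinuousAt (fun x : ℝ => x ^ α) 0 := Real.continuousAt_rpow_const 0 α (Or.inr h0.le)
      have h4 : Tendsto (fun s : ℝ => (1 - s) ^ α) (𝓝 (1:ℝ)) (𝓝 ((0:ℝ) ^ α)) :=
        (h3.tendsto).comp h2
      rw [Real.zero_rpow (ne_of_gt h0)] at h4
      have := (tendsto_const_nhds (x := (1:ℝ))).sub h4
      rw [sub_zero] at this
      exact this.mono_left nhdsWithin_le_nhds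
    apply le_of_tendsto htd
    filter_upwards [self_mem_nhdsWithin] with s hs
    have hsum := hasSum_bb_pow h0 h1 hs.1.le hs.2
    rw [← hsum.tsum_eq]
    apply Summable.tsum_le_tsum _ hsum.summable hsummable
    intro n
    calc bb α n * s ^ n ≤ bb α n * 1 := by
          apply mul_le_mul_of_nonneg_left _ (bb_nonneg h0 h1 n)
          exact pow_le_one₀ hs.1.le hs.2.le
      _ = bb α n := mul_one _
  have : ∑' n, bb α n = 1 := le_antisymm hle hge
  rw [← this]
  exact hsummable.hasSum

/-! ### Shifting sums -/

lemma hasSum_shift1 {f : ℕ → ℝ} {a : ℝ} (h : HasSum f a) :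
    HasSum (fun n => f (n + 1)) (a - f 0) := by
  rw [hasSum_nat_add_iff 1]
  simpa using h

/-- `h` is a probability generating function of a distribution on `ℕ`:
it is given on `(0,1)` by a power series with nonnegative coefficients summing to 1. -/
def IsPGF (h : ℝ → ℝ) : Prop :=
  ∃ a : ℕ → ℝ, (∀ n, 0 ≤ a n) ∧ HasSum a 1 ∧
    ∀ s ∈ Set.Ioo (0:ℝ) 1, HasSum (fun n => a n * s ^ n) (h s)

/-- `f(s) = s + c(1−s)^{1+α}`, `g(s) = 1 − d(1−s)^α` and
`g_p(s) = 1 − p + p·s·g(s)` are probability generating functions. -/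
theorem pgf_examples (α c d p : ℝ)
    (hα : α ∈ Set.Ioo (0:ℝ) 1) (hd : 0 < d ∧ d < 1)
    (hc : 0 < c * (1 + α) ∧ c * (1 + α) < 1) (hp : 0 < p ∧ p < 1)
    (f g gp : ℝ → ℝ)
    (hf : ∀ s ∈ Set.Ioo (0:ℝ) 1, f s = s + c * (1 - s) ^ (1 + α))
    (hg : ∀ s ∈ Set.Ioo (0:ℝ) 1, g s = 1 - d * (1 - s) ^ α)
    (hgp : ∀ s ∈ Set.Ioo (0:ℝ) 1, gp s = 1 - p + p * s * g s) :
    IsPGF f ∧ IsPGF g ∧ IsPGF gp := by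
  obtain ⟨h0, h1⟩ := hα
  have hcpos : 0 < c := by nlinarith [hc.1]
  -- the coefficients
  set ag : ℕ → ℝ := fun n => if n = 0 then 1 - d else d * bb α n with hag
  set af : ℕ → ℝ := fun n => match n with
    | 0 => c
    | 1 => 1 - c * (1 + α)
    | (k+2) => c * (bb α (k+1) - bb α (k+2)) with haf
  set agp : ℕ → ℝ := fun n => match n with
    | 0 => 1 - p
    | (k+1) => p * ag k with hagp
  -- `g` is a PGF
  have hg_sum : HasSum ag 1 := by
    have h := (hasSum_ite_eq (0:ℕ) (1-d)).add ((hasSum_bb h0 h1).mul_left d)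
    have h2 : HasSum ag ((1 - d) + d * 1) := by
      apply h.congr_fun
      intro n
      cases n with
      | zero => simp [hag, bb_zero]
      | succ k => simp [hag]
    simpa using h2
  have hg_nonneg : ∀ n, 0 ≤ ag n := by
    intro n
    cases n with
    | zero => simp [hag]; linarith [hd.2]
    | succ k =>
        simp only [hag, Nat.succ_ne_zero, if_false]
        exact mul_nonneg hd.1.le (bb_nonneg h0 h1 _)
  have hg_series : ∀ s ∈ Set.Ioo (0:ℝ) 1, HasSum (fun n => ag n * s ^ n) (g s) := by
    intro s hs
    rw [hg s hs]
    have h := (hasSum_ite_eq (0:ℕ) (1-d)).add ((hasSum_bb_pow h0 h1 hs.1.le hs.2).mul_left d)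
    have h2 : HasSum (fun n => ag n * s ^ n) ((1 - d) + d * (1 - (1 - s) ^ α)) := by
      apply h.congr_fun
      intro n
      cases n with
      | zero => simp [hag, bb_zero]
      | succ k => simp [hag]; ring
    convert h2 using 1
    ring
  have hgIs : IsPGF g := ⟨ag, hg_nonneg, hg_sum, hg_series⟩
  -- `f` is a PGF
  have hbb1 : HasSum (fun n => bb α (n+1)) 1 := by
    have := hasSum_shift1 (hasSum_bb h0 h1)
    simpa [bb_zero] using this
  have hbb2 : HasSum (fun n => bb α (n+2)) (1 - α) := by
    have := hasSum_shift1 hbb1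
    simpa [bb_one] using this
  have hf_sum : HasSum af 1 := by
    have hT : HasSum (fun k => c * (bb α (k+1) - bb α (k+2))) (c * (1 - (1 - α))) :=
      (hbb1.sub hbb2).mul_left c
    have h := (hasSum_nat_add_iff (f := af) 2).1 (hT.congr_fun (fun n => rfl))
    have hval : c * (1 - (1 - α)) + ∑ i ∈ Finset.range 2, af i = 1 := by
      simp [haf, Finset.sum_range_succ]
      ring
    rwa [hval] at h
  have hf_nonneg : ∀ n, 0 ≤ af n := by
    intro n
    match n with
    | 0 => exact hcpos.le
    | 1 => simp only [haf]; linarith [hc.2]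
    | (k+2) =>
        simp only [haf]
        exact mul_nonneg hcpos.le (by linarith [bb_antitone h0 h1 k])
  have hf_series : ∀ s ∈ Set.Ioo (0:ℝ) 1, HasSum (fun n => af n * s ^ n) (f s) := by
    intro s hs
    rw [hf s hs]
    have h1s : 0 < 1 - s := by linarith [hs.2]
    have hb0 : HasSum (fun n => bb α n * s ^ n) (1 - (1 - s) ^ α) :=
      hasSum_bb_pow h0 h1 hs.1.le hs.2
    have hb1 : HasSum (fun n => bb α (n+1) * s ^ (n+1)) (1 - (1 - s) ^ α) := by
      have := hasSum_shift1 hb0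
      simpa [bb_zero] using this
    have hb2 : HasSum (fun n => bb α (n+2) * s ^ (n+2)) ((1 - (1 - s) ^ α) - α * s) := by
      have := hasSum_shift1 hb1
      simpa [bb_one] using this
    have hmul : HasSum (fun n => s * (bb α (n+1) * s ^ (n+1))) (s * (1 - (1 - s) ^ α)) :=
      hb1.mul_left s
    have hdiff : HasSum (fun n => af (n+2) * s ^ (n+2))
        (c * (s * (1 - (1 - s) ^ α) - ((1 - (1 - s) ^ α) - α * s))) := by
      apply ((hmul.sub hb2).mul_left c).congr_fun
      intro n
      show af (n+2) * s ^ (n+2) = c * (s * (bb α (n+1) * s ^ (n+1)) - bb α (n+2) * s ^ (n+2))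
      simp only [haf]
      rw [pow_succ (a := s) (n := n+1)]
      ring
    have h := (hasSum_nat_add_iff (f := fun n => af n * s ^ n) 2).1 hdiff
    have hpow : (1 - s) ^ (1 + α) = (1 - s) * (1 - s) ^ α := by
      rw [Real.rpow_add h1s, Real.rpow_one]
    have hval : c * (s * (1 - (1 - s) ^ α) - ((1 - (1 - s) ^ α) - α * s))
        + ∑ i ∈ Finset.range 2, af i * s ^ i = s + c * (1 - s) ^ (1 + α) := by
      rw [hpow]
      simp [haf, Finset.sum_range_succ]
      ring
    rwa [hval] at h
  have hfIs : IsPGF f := ⟨af, hf_nonneg, hf_sum, hf_series⟩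
  -- `gp` is a PGF
  have hgp_sum : HasSum agp 1 := by
    have hshift : HasSum (fun n => agp (n+1)) (p * 1) :=
      (hg_sum.mul_left p).congr_fun (fun n => rfl)
    have h := (hasSum_nat_add_iff (f := agp) 1).1 hshift
    have hval : p * 1 + ∑ i ∈ Finset.range 1, agp i = 1 := by
      simp [hagp]
    rwa [hval] at h
  have hgp_nonneg : ∀ n, 0 ≤ agp n := by
    intro n
    match n with
    | 0 => simp only [hagp]; linarith [hp.2]
    | (k+1) => exact mul_nonneg hp.1.le (hg_nonneg k)
  have hgp_series : ∀ s ∈ Set.Ioo (0:ℝ) 1, HasSum (fun n => agp n * s ^ n) (gp s) := by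
    intro s hs
    rw [hgp s hs]
    have hshift : HasSum (fun n => agp (n+1) * s ^ (n+1)) (p * s * g s) := by
      apply ((hg_series s hs).mul_left (p * s)).congr_fun
      intro n
      show agp (n+1) * s ^ (n+1) = p * s * (ag n * s ^ n)
      simp only [hagp]
      rw [pow_succ]
      ring
    have h := (hasSum_nat_add_iff (f := fun n => agp n * s ^ n) 1).1 hshift
    have hval : p * s * g s + ∑ i ∈ Finset.range 1, agp i * s ^ i = 1 - p + p * s * g s := by
      simp [hagp]
      ring
    rwa [hval] at h
  exact ⟨hfIs, hgIs, ⟨agp, hgp_nonneg, hgp_sum, hgp_series⟩⟩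
end
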